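/- Let G be a graph with vertex set [n] and maximum degree Δ > 0, let χ be a k-bounded edge colouring of the complete graph K_n on vertex set [n], and consider the uniform probability measure on the set ℐ of injections from [n] to [n]. Let 𝒳 be the set of all bad events X(e⃗,f⃗;a⃗,b⃗): canonical events consisting of all σ ∈ ℐ mapping the ordered pair e⃗ onto a⃗ and the ordered pair f⃗ onto b⃗, where e⃗, f⃗ are lexicographically ordered ordered pairs coming from distinct edges e, f of G, a⃗ = (a_1,a_2), b⃗ = (b_1,b_2) are ordered pairs of distinct vertices of K_n with χ({a_1,a_2}) = χ({b_1,b_2}), and some injection consistent with these requirements exists. Call an event of intersecting type if e ∩ f ≠ ∅ and of disjoint type otherwise, and let D' be the intersection graph on 𝒳 (two events adjacent iff their G-edge vertex sets e∪f intersect or their K_n-edge vertex sets a∪b intersect). Then for every bad event X = X(e⃗,f⃗;a⃗,b⃗): (1) for each vertex x ∈ e∪f, the set consisting of X together with all bad events whose G-edge vertex set contains x is a clique in D', containing at most (3/2)·Δ²·n²·k events of intersecting type and at most Δ²·n³·k events of disjoint type (including X itself); and (2) for each vertex u ∈ a∪b, the set of all bad events whose K_n-edge vertex set contains u is a clique in D',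 containing at most Δ²·n²·k events of intersecting type and at most Δ²·n³·k events of disjoint type. -/

import Mathlib

/-- A *bad event* for the rainbow-embedding argument: it is determined by a
lexicographically ordered pair of (oriented) distinct edges `e⃗ = (e1,e2)`, `f⃗ = (f1,f2)`
of `G` and ordered pairs `a⃗ = (a1,a2)`, `b⃗ = (b1,b2)` of distinct vertices of `K_n` whose
corresponding edges receive the same colour under `χ`, such that some injection
`σ : [n] ↪ [n]` maps `e⃗` onto `a⃗` and `f⃗` onto `b⃗`.  The associated canonical event is
the set of all such injections. -/
structure BadEvent {C : Type*} (n : ℕ) (G : SimpleGraph (Fin n))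
    (χ : Sym2 (Fin n) → C) where
  e1 : Fin n
  e2 : Fin n
  f1 : Fin n
  f2 : Fin n
  a1 : Fin n
  a2 : Fin n
  b1 : Fin n
  b2 : Fin n
  he : G.Adj e1 e2
  hf : G.Adj f1 f2
  he_lt : e1 < e2
  hf_lt : f1 < f2
  hlex : e1 < f1 ∨ (e1 = f1 ∧ e2 < f2)
  ha : a1 ≠ a2
  hb : b1 ≠ b2
  hcol : χ s(a1, a2) = χ s(b1, b2)
  hex : ∃ σ : Fin n ↪ Fin n, σ e1 = a1 ∧ σ e2 = a2 ∧ σ f1 = b1 ∧ σ f2 = b2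

variable {C : Type*} {n : ℕ} {G : SimpleGraph (Fin n)} {χ : Sym2 (Fin n) → C}

/-- The vertex set `e ∪ f` in `G` of the two `G`-edges of a bad event. -/
def BadEvent.Gverts (X : BadEvent n G χ) : Finset (Fin n) := {X.e1, X.e2, X.f1, X.f2}

/-- The vertex set `a ∪ b` in `K_n` of the two `K_n`-edges of a bad event. -/
def BadEvent.Kverts (X : BadEvent n G χ) : Finset (Fin n) := {X.a1, X.a2, X.b1, X.b2}

/-- A bad event is of *intersecting type* if its two `G`-edges share a vertex; otherwise
it is of *disjoint type*. -/
def BadEvent.IsIntersectingType (X : BadEvent n G χ) : Prop :=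
  X.e1 = X.f1 ∨ X.e1 = X.f2 ∨ X.e2 = X.f1 ∨ X.e2 = X.f2

/-- The *intersection graph* `D'` on the bad events: two distinct bad events are adjacent
iff they are `G`-intersecting (their `G`-edge vertex sets intersect) or `K_n`-intersecting
(their `K_n`-edge vertex sets intersect). -/
def intersectionGraph (n : ℕ) (G : SimpleGraph (Fin n)) (χ : Sym2 (Fin n) → C) :
    SimpleGraph (BadEvent n G χ) where
  Adj X Y := X ≠ Y ∧
    ((X.Gverts ∩ Y.Gverts).Nonempty ∨ (X.Kverts ∩ Y.Kverts).Nonempty)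
  symm := ⟨by
    rintro X Y ⟨hne, h⟩
    refine ⟨hne.symm, ?_⟩
    rcases h with h | h
    · exact Or.inl (by rwa [Finset.inter_comm])
    · exact Or.inr (by rwa [Finset.inter_comm])⟩
  loopless := ⟨fun X h => h.1 rfl⟩

lemma BadEvent.ext' {Y Y' : BadEvent n G χ}
    (h1 : Y.e1 = Y'.e1) (h2 : Y.e2 = Y'.e2) (h3 : Y.f1 = Y'.f1) (h4 : Y.f2 = Y'.f2)
    (h5 : Y.a1 = Y'.a1) (h6 : Y.a2 = Y'.a2) (h7 : Y.b1 = Y'.b1) (h8 : Y.b2 = Y'.b2) :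
    Y = Y' := by
  cases Y; cases Y'; simp_all

instance : Finite (BadEvent n G χ) := by
  apply Finite.of_injective
    (fun Y : BadEvent n G χ => (Y.e1, Y.e2, Y.f1, Y.f2, Y.a1, Y.a2, Y.b1, Y.b2))
  intro Y Y' h
  simp only [Prod.mk.injEq] at h
  exact BadEvent.ext' h.1 h.2.1 h.2.2.1 h.2.2.2.1 h.2.2.2.2.1 h.2.2.2.2.2.1
    h.2.2.2.2.2.2.1 h.2.2.2.2.2.2.2

lemma sym2_sorted {a b c d : Fin n} (h : s(a,b) = s(c,d)) (h1 : a < b) (h2 : c < d) :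
    a = c ∧ b = d := by
  rw [Sym2.eq_iff] at h
  rcases h with ⟨rfl, rfl⟩ | ⟨rfl, rfl⟩
  · exact ⟨rfl, rfl⟩
  · exact absurd h2 (not_lt_of_gt h1)

lemma sym2_cancel {a b b' : Fin n} (h : s(a,b) = s(a,b')) (hab : a ≠ b) : b = b' := by
  rw [Sym2.eq_iff] at h
  rcases h with ⟨-, rfl⟩ | ⟨rfl, rfl⟩
  · rfl
  · exact absurd rfl hab

lemma sym2_common {g g' : Sym2 (Fin n)} {w w' : Fin n} (hg : g ≠ g')
    (hw : w ∈ g) (hw2 : w ∈ g') (hw' : w' ∈ g) (hw2' : w' ∈ g') : w = w' := by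
  by_contra hne
  exact hg (((Sym2.mem_and_mem_iff hne).1 ⟨hw, hw'⟩).trans
    ((Sym2.mem_and_mem_iff hne).1 ⟨hw2, hw2'⟩).symm)

lemma BadEvent.e1_lt_f2 (Y : BadEvent n G χ) : Y.e1 < Y.f2 := by
  rcases Y.hlex with h | ⟨h, -⟩
  · exact h.trans Y.hf_lt
  · exact h ▸ Y.hf_lt

/-- the e/f tuples are recovered from the unordered pair of edges -/
lemma efeq {Y Y' : BadEvent n G χ}
    (h : (s(Y.e1,Y.e2) = s(Y'.e1,Y'.e2) ∧ s(Y.f1,Y.f2) = s(Y'.f1,Y'.f2)) ∨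
         (s(Y.e1,Y.e2) = s(Y'.f1,Y'.f2) ∧ s(Y.f1,Y.f2) = s(Y'.e1,Y'.e2))) :
    Y.e1 = Y'.e1 ∧ Y.e2 = Y'.e2 ∧ Y.f1 = Y'.f1 ∧ Y.f2 = Y'.f2 := by
  rcases h with ⟨h1, h2⟩ | ⟨h1, h2⟩
  · obtain ⟨p1, p2⟩ := sym2_sorted h1 Y.he_lt Y'.he_lt
    obtain ⟨q1, q2⟩ := sym2_sorted h2 Y.hf_lt Y'.hf_lt
    exact ⟨p1, p2, q1, q2⟩
  · obtain ⟨p1, p2⟩ := sym2_sorted h1 Y.he_lt Y'.hf_lt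
    obtain ⟨q1, q2⟩ := sym2_sorted h2 Y.hf_lt Y'.he_lt
    exfalso
    rcases Y.hlex with hl | ⟨hl, hl2⟩ <;> rcases Y'.hlex with hl' | ⟨hl', hl2'⟩
    · have h2 : Y.f1 < Y.e1 := by rw [q1, p1]; exact hl'
      exact absurd hl (not_lt_of_gt h2)
    · have h2 : Y.f1 = Y.e1 := by rw [q1, p1]; exact hl'
      exact absurd hl (by rw [h2]; exact lt_irrefl _)
    · have h2 : Y.f1 < Y.e1 := by rw [q1, p1]; exact hl'
      rw [hl] at h2; exact lt_irrefl _ h2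
    · have h2 : Y.f2 < Y.e2 := by rw [q2, p2]; exact hl2'
      exact absurd hl2 (not_lt_of_gt h2)

lemma sym2_cancelr {a b b' : Fin n} (h : s(b,a) = s(b',a)) (hab : b ≠ a) : b = b' := by
  rw [Sym2.eq_iff] at h
  rcases h with ⟨rfl, -⟩ | ⟨rfl, rfl⟩
  · rfl
  · exact absurd rfl hab

lemma sym2_orient {a b a' b' : Fin n} (h : s(a,b) = s(a',b')) (hne : a ≠ b)
    (hor : a < b ↔ a' < b') : a = a' ∧ b = b' := by
  have hne' : a' ≠ b' := by
    rintro rfl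
    rw [Sym2.eq_iff] at h
    rcases h with ⟨rfl, rfl⟩ | ⟨rfl, rfl⟩ <;> exact hne rfl
  by_cases hab : a < b
  · exact sym2_sorted h hab (hor.1 hab)
  · have h1 : b < a := lt_of_le_of_ne (le_of_not_gt hab) (Ne.symm hne)
    have h2 : b' < a' := lt_of_le_of_ne (le_of_not_gt (fun hx => hab (hor.2 hx))) (Ne.symm hne')
    have h3 : s(b,a) = s(b',a') := by rw [Sym2.eq_swap, h, Sym2.eq_swap]
    obtain ⟨u, v⟩ := sym2_sorted h3 h1 h2
    exact ⟨v, u⟩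

/-- an intersecting-type event is determined by its `e⃗,f⃗` tuples and its two `K_n`-edges. -/
lemma eq_of_int {Y Y' : BadEvent n G χ} (hint : Y.IsIntersectingType)
    (h1 : Y.e1 = Y'.e1) (h2 : Y.e2 = Y'.e2) (h3 : Y.f1 = Y'.f1) (h4 : Y.f2 = Y'.f2)
    (ha : s(Y.a1,Y.a2) = s(Y'.a1,Y'.a2)) (hb : s(Y.b1,Y.b2) = s(Y'.b1,Y'.b2)) :
    Y = Y' := by
  obtain ⟨σ, hs1, hs2, hs3, hs4⟩ := Y.hex
  obtain ⟨σ', hs1', hs2', hs3', hs4'⟩ := Y'.hex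
  rcases hint with hp | hp | hp | hp
  · -- e1 = f1 : a1 = b1 is the common vertex
    have hab : Y.a1 = Y.b1 := by rw [← hs1, ← hs3, hp]
    have hab' : Y'.a1 = Y'.b1 := by rw [← hs1', ← hs3', ← h1, ← h3, hp]
    have hne : s(Y.a1,Y.a2) ≠ s(Y.b1,Y.b2) := by
      intro hEq
      rw [Sym2.eq_iff] at hEq
      rcases hEq with ⟨u1, u2⟩ | ⟨u1, u2⟩
      · have hef : Y.e2 = Y.f2 := σ.injective (by rw [hs2, hs4, u2])
        rcases Y.hlex with hl | ⟨-, hl⟩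
        · exact absurd (hp ▸ hl) (lt_irrefl _)
        · exact absurd (hef ▸ hl) (lt_irrefl _)
      · exact Y.ha (hab.trans u2.symm)
    have hne' : s(Y'.a1,Y'.a2) ≠ s(Y'.b1,Y'.b2) := by rw [← ha, ← hb]; exact hne
    have ha1 : Y.a1 = Y'.a1 := by
      apply sym2_common hne (Sym2.mem_mk_left _ _) (by rw [hab]; exact Sym2.mem_mk_left _ _)
      · rw [ha]; exact Sym2.mem_mk_left _ _
      · rw [hb, hab']; exact Sym2.mem_mk_left _ _
    have ha2 : Y.a2 = Y'.a2 := sym2_cancel (ha1 ▸ ha) Y.ha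
    have hb1 : Y.b1 = Y'.b1 := by rw [← hab, ← hab', ha1]
    have hb2 : Y.b2 = Y'.b2 := sym2_cancel (hb1 ▸ hb) Y.hb
    exact BadEvent.ext' h1 h2 h3 h4 ha1 ha2 hb1 hb2
  · exact absurd (hp ▸ Y.e1_lt_f2) (lt_irrefl _)
  · -- e2 = f1 : a2 = b1 is the common vertex
    have hab : Y.a2 = Y.b1 := by rw [← hs2, ← hs3, hp]
    have hab' : Y'.a2 = Y'.b1 := by rw [← hs2', ← hs3', ← h2, ← h3, hp]
    have hne : s(Y.a1,Y.a2) ≠ s(Y.b1,Y.b2) := by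
      intro hEq
      rw [Sym2.eq_iff] at hEq
      rcases hEq with ⟨u1, u2⟩ | ⟨u1, u2⟩
      · have hef : Y.e1 = Y.f1 := σ.injective (by rw [hs1, hs3, u1])
        exact absurd (hef ▸ hp : Y.e2 = Y.e1) (by intro hx; exact absurd (hx ▸ Y.he_lt) (lt_irrefl _))
      · have hef : Y.e1 = Y.f2 := σ.injective (by rw [hs1, hs4, u1])
        exact absurd (hef ▸ Y.e1_lt_f2) (lt_irrefl _)
    have hne' : s(Y'.a1,Y'.a2) ≠ s(Y'.b1,Y'.b2) := by rw [← ha, ← hb]; exact hne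
    have ha2 : Y.a2 = Y'.a2 := by
      apply sym2_common hne (Sym2.mem_mk_right _ _) (by rw [hab]; exact Sym2.mem_mk_left _ _)
      · rw [ha]; exact Sym2.mem_mk_right _ _
      · rw [hb, hab']; exact Sym2.mem_mk_left _ _
    have ha1 : Y.a1 = Y'.a1 := sym2_cancelr (ha2 ▸ ha) Y.ha
    have hb1 : Y.b1 = Y'.b1 := by rw [← hab, ← hab', ha2]
    have hb2 : Y.b2 = Y'.b2 := sym2_cancel (hb1 ▸ hb) Y.hb
    exact BadEvent.ext' h1 h2 h3 h4 ha1 ha2 hb1 hb2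
  · -- e2 = f2 : a2 = b2 is the common vertex
    have hab : Y.a2 = Y.b2 := by rw [← hs2, ← hs4, hp]
    have hab' : Y'.a2 = Y'.b2 := by rw [← hs2', ← hs4', ← h2, ← h4, hp]
    have hne : s(Y.a1,Y.a2) ≠ s(Y.b1,Y.b2) := by
      intro hEq
      rw [Sym2.eq_iff] at hEq
      rcases hEq with ⟨u1, u2⟩ | ⟨u1, u2⟩
      · have hef : Y.e1 = Y.f1 := σ.injective (by rw [hs1, hs3, u1])
        rcases Y.hlex with hl | ⟨-, hl⟩
        · exact absurd (hef ▸ hl) (lt_irrefl _)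
        · exact absurd (hp ▸ hl) (lt_irrefl _)
      · have hef : Y.e1 = Y.f2 := σ.injective (by rw [hs1, hs4, u1])
        exact absurd (hef ▸ Y.e1_lt_f2) (lt_irrefl _)
    have hne' : s(Y'.a1,Y'.a2) ≠ s(Y'.b1,Y'.b2) := by rw [← ha, ← hb]; exact hne
    have ha2 : Y.a2 = Y'.a2 := by
      apply sym2_common hne (Sym2.mem_mk_right _ _) (by rw [hab]; exact Sym2.mem_mk_right _ _)
      · rw [ha]; exact Sym2.mem_mk_right _ _
      · rw [hb, hab']; exact Sym2.mem_mk_right _ _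
    have ha1 : Y.a1 = Y'.a1 := sym2_cancelr (ha2 ▸ ha) Y.ha
    have hb2 : Y.b2 = Y'.b2 := by rw [← hab, ← hab', ha2]
    have hb1 : Y.b1 = Y'.b1 := sym2_cancelr (hb2 ▸ hb) Y.hb
    exact BadEvent.ext' h1 h2 h3 h4 ha1 ha2 hb1 hb2

/-- any event is determined by its tuples, its `K_n`-edges and their orientations. -/
lemma eq_of_disj {Y Y' : BadEvent n G χ}
    (h1 : Y.e1 = Y'.e1) (h2 : Y.e2 = Y'.e2) (h3 : Y.f1 = Y'.f1) (h4 : Y.f2 = Y'.f2)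
    (ha : s(Y.a1,Y.a2) = s(Y'.a1,Y'.a2)) (hb : s(Y.b1,Y.b2) = s(Y'.b1,Y'.b2))
    (hA : Y.a1 < Y.a2 ↔ Y'.a1 < Y'.a2) (hB : Y.b1 < Y.b2 ↔ Y'.b1 < Y'.b2) :
    Y = Y' := by
  obtain ⟨ha1, ha2⟩ := sym2_orient ha Y.ha hA
  obtain ⟨hb1, hb2⟩ := sym2_orient hb Y.hb hB
  exact BadEvent.ext' h1 h2 h3 h4 ha1 ha2 hb1 hb2

lemma two_mul_card_filter_le {β : Type*} [DecidableEq β] (s : Finset β) (r : β → β → Prop)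
    [DecidableRel r] (hr : ∀ p q, r p q → ¬ r q p) :
    2 * ((s ×ˢ s).filter fun p => r p.1 p.2).card ≤ s.card * s.card := by
  classical
  set L := (s ×ˢ s).filter fun p => r p.1 p.2 with hL
  set R := (s ×ˢ s).filter fun p => r p.2 p.1 with hR
  have hcard : L.card = R.card := by
    apply Finset.card_nbij' Prod.swap Prod.swap ?_ ?_
      (fun p _ => Prod.swap_swap p) (fun p _ => Prod.swap_swap p)
    · intro p hp
      simp only [hL, hR, Finset.mem_filter, Finset.mem_product] at hp ⊢
      have hp' := Finset.mem_filter.1 (show p ∈ L from hp)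
      exact Finset.mem_filter.2 ⟨Finset.mem_product.2 ⟨(Finset.mem_product.1 hp'.1).2, (Finset.mem_product.1 hp'.1).1⟩, hp'.2⟩
    · intro p hp
      simp only [hL, hR, Finset.mem_filter, Finset.mem_product] at hp ⊢
      have hp' := Finset.mem_filter.1 (show p ∈ R from hp)
      exact Finset.mem_filter.2 ⟨Finset.mem_product.2 ⟨(Finset.mem_product.1 hp'.1).2, (Finset.mem_product.1 hp'.1).1⟩, hp'.2⟩
  have hdisj : Disjoint L R := by
    rw [Finset.disjoint_left]
    intro p hp hq
    simp only [hL, hR, Finset.mem_filter] at hp hq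
    exact hr _ _ hp.2 hq.2
  calc 2 * L.card = L.card + R.card := by rw [hcard]; ring
    _ = (L ∪ R).card := (Finset.card_union_of_disjoint hdisj).symm
    _ ≤ (s ×ˢ s).card := Finset.card_le_card (Finset.union_subset
        (Finset.filter_subset _ _) (Finset.filter_subset _ _))
    _ = s.card * s.card := Finset.card_product s s

lemma two_mul_sorted_edges_le [DecidableRel G.Adj] :
    2 * (Finset.univ.filter fun p : Fin n × Fin n => G.Adj p.1 p.2 ∧ p.1 < p.2).card ≤
      n * G.maxDegree := by
  have h1 : (Finset.univ.filter fun p : Fin n × Fin n => G.Adj p.1 p.2 ∧ p.1 < p.2).card ≤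
      G.edgeFinset.card := by
    apply Finset.card_le_card_of_injOn (fun p => s(p.1, p.2))
    · intro p hp
      simp only [Finset.coe_filter, Finset.mem_coe, Finset.mem_filter, Set.mem_setOf_eq] at hp
      exact SimpleGraph.mem_edgeFinset.2 (G.mem_edgeSet.2 hp.2.1)
    · intro p hp q hq hEq
      simp only [Finset.coe_filter, Set.mem_setOf_eq] at hp hq
      obtain ⟨u, v⟩ := sym2_sorted hEq hp.2.2 hq.2.2
      exact Prod.ext u v
  have h2 : ∑ v : Fin n, G.degree v = 2 * G.edgeFinset.card :=
    SimpleGraph.sum_degrees_eq_twice_card_edges G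
  have h3 : ∑ v : Fin n, G.degree v ≤ n * G.maxDegree := by
    calc ∑ v : Fin n, G.degree v ≤ ∑ _v : Fin n, G.maxDegree :=
          Finset.sum_le_sum fun v _ => G.degree_le_maxDegree v
      _ = n * G.maxDegree := by
          rw [Finset.sum_const, Finset.card_univ, Fintype.card_fin, smul_eq_mul]
  omega

/-- master counting lemma -/
lemma master_count {α : Type*} {β : Type*} [Fintype β] [DecidableEq β] {k : ℕ}
    (hχ : ∀ c : C, {e : Sym2 (Fin n) | ¬ e.IsDiag ∧ χ e = c}.ncard ≤ k)
    (S : Set α) (B : Finset β) (g : α → β) (h : α → Sym2 (Fin n)) (c : β → C)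
    (hmem : ∀ Y ∈ S, g Y ∈ B)
    (hcol : ∀ Y ∈ S, ¬(h Y).IsDiag ∧ χ (h Y) = c (g Y))
    (hinj : ∀ Y ∈ S, ∀ Y' ∈ S, g Y = g Y' → h Y = h Y' → Y = Y') :
    S.ncard ≤ B.card * k := by
  classical
  set φ : α → β × Sym2 (Fin n) := fun Y => (g Y, h Y) with hφdef
  have hφ : Set.InjOn φ S := fun Y hY Y' hY' hEq =>
    hinj Y hY Y' hY' (congrArg Prod.fst hEq) (congrArg Prod.snd hEq)
  rw [← Set.ncard_image_of_injOn hφ]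
  set T : Set (β × Sym2 (Fin n)) :=
    {p : β × Sym2 (Fin n) | p.1 ∈ B ∧ ¬p.2.IsDiag ∧ χ p.2 = c p.1} with hT
  have hsub : φ '' S ⊆ T := by
    rintro p ⟨Y, hY, rfl⟩
    exact ⟨hmem Y hY, (hcol Y hY).1, (hcol Y hY).2⟩
  refine le_trans (Set.ncard_le_ncard hsub (Set.toFinite T)) ?_
  rw [Set.ncard_eq_toFinset_card T (Set.toFinite T)]
  have hsub2 : (Set.toFinite T).toFinset ⊆
      B.biUnion fun b => ((Set.toFinite {e : Sym2 (Fin n) | ¬ e.IsDiag ∧ χ e = c b}).toFinset).image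
        fun e => (b, e) := by
    intro p hp
    rw [Set.Finite.mem_toFinset] at hp
    rw [Finset.mem_biUnion]
    refine ⟨p.1, hp.1, ?_⟩
    rw [Finset.mem_image]
    exact ⟨p.2, by rw [Set.Finite.mem_toFinset]; exact hp.2, rfl⟩
  refine le_trans (Finset.card_le_card hsub2) (le_trans Finset.card_biUnion_le ?_)
  calc ∑ b ∈ B, ((Set.toFinite {e : Sym2 (Fin n) | ¬ e.IsDiag ∧ χ e = c b}).toFinset.image
        fun e => (b, e)).card
      ≤ ∑ _b ∈ B, k := Finset.sum_le_sum (fun b _ => le_trans Finset.card_image_le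
        (by rw [← Set.ncard_eq_toFinset_card]; exact hχ (c b)))
    _ = B.card * k := by rw [Finset.sum_const, smul_eq_mul]

lemma mem_Gverts_iff {Y : BadEvent n G χ} {x : Fin n} :
    x ∈ Y.Gverts ↔ x = Y.e1 ∨ x = Y.e2 ∨ x = Y.f1 ∨ x = Y.f2 := by
  simp [BadEvent.Gverts]

lemma mem_Kverts_iff {Y : BadEvent n G χ} {u : Fin n} :
    u ∈ Y.Kverts ↔ u = Y.a1 ∨ u = Y.a2 ∨ u = Y.b1 ∨ u = Y.b2 := by
  simp [BadEvent.Kverts]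

lemma two_mul_edgeFinset_card_le [DecidableRel G.Adj] :
    2 * G.edgeFinset.card ≤ n * G.maxDegree := by
  have h2 : ∑ v : Fin n, G.degree v = 2 * G.edgeFinset.card :=
    SimpleGraph.sum_degrees_eq_twice_card_edges G
  have h3 : ∑ v : Fin n, G.degree v ≤ n * G.maxDegree := by
    calc ∑ v : Fin n, G.degree v ≤ ∑ _v : Fin n, G.maxDegree :=
          Finset.sum_le_sum fun v _ => G.degree_le_maxDegree v
      _ = n * G.maxDegree := by
          rw [Finset.sum_const, Finset.card_univ, Fintype.card_fin, smul_eq_mul]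
  omega

/-- the count of all events containing a fixed `G`-vertex. -/
lemma count_G_all [DecidableRel G.Adj] {Δ k : ℕ} (hΔ : G.maxDegree = Δ)
    (hχ : ∀ c : C, {e : Sym2 (Fin n) | ¬ e.IsDiag ∧ χ e = c}.ncard ≤ k) (x : Fin n) :
    ({Y : BadEvent n G χ | x ∈ Y.Gverts}).ncard ≤ Δ ^ 2 * n ^ 3 * k := by
  classical
  set yv : BadEvent n G χ → Fin n := fun Y =>
    if x = Y.e1 then Y.e2 else if x = Y.e2 then Y.e1 else if x = Y.f1 then Y.f2 else Y.f1
    with hyv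
  set oE : BadEvent n G χ → Sym2 (Fin n) := fun Y =>
    if x = Y.e1 ∨ x = Y.e2 then s(Y.f1, Y.f2) else s(Y.e1, Y.e2) with hoE
  have key : ∀ Y : BadEvent n G χ, x ∈ Y.Gverts →
      (s(Y.e1,Y.e2) = s(x, yv Y) ∧ s(Y.f1,Y.f2) = oE Y) ∨
      (s(Y.e1,Y.e2) = oE Y ∧ s(Y.f1,Y.f2) = s(x, yv Y)) := by
    intro Y hY
    rw [mem_Gverts_iff] at hY
    by_cases hc : x = Y.e1 ∨ x = Y.e2
    · left
      refine ⟨?_, by simp only [hoE, if_pos hc]⟩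
      rcases hc with hc | hc
      · simp only [hyv, if_pos hc]; rw [hc]
      · by_cases hc1 : x = Y.e1
        · simp only [hyv, if_pos hc1]; rw [hc1]
        · simp only [hyv, if_neg hc1, if_pos hc]; rw [hc, Sym2.eq_swap]
    · right
      push_neg at hc
      have hf : x = Y.f1 ∨ x = Y.f2 := by tauto
      refine ⟨by simp only [hoE, if_neg (by tauto : ¬(x = Y.e1 ∨ x = Y.e2))], ?_⟩
      rcases hf with hf | hf
      · simp only [hyv, if_neg hc.1, if_neg hc.2, if_pos hf]; rw [hf]
      · by_cases hf1 : x = Y.f1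
        · simp only [hyv, if_neg hc.1, if_neg hc.2, if_pos hf1]; rw [hf1]
        · simp only [hyv, if_neg hc.1, if_neg hc.2, if_neg hf1]; rw [hf, Sym2.eq_swap]
  have hadj : ∀ Y : BadEvent n G χ, x ∈ Y.Gverts → G.Adj x (yv Y) := by
    intro Y hY
    rw [mem_Gverts_iff] at hY
    by_cases h1 : x = Y.e1
    · simp only [hyv, if_pos h1]; rw [h1]; exact Y.he
    · by_cases h2 : x = Y.e2
      · simp only [hyv, if_neg h1, if_pos h2]; rw [h2]; exact Y.he.symm
      · by_cases h3 : x = Y.f1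
        · simp only [hyv, if_neg h1, if_neg h2, if_pos h3]; rw [h3]; exact Y.hf
        · have h4 : x = Y.f2 := by tauto
          simp only [hyv, if_neg h1, if_neg h2, if_neg h3]; rw [h4]; exact Y.hf.symm
  have hoEmem : ∀ Y : BadEvent n G χ, oE Y ∈ G.edgeFinset := by
    intro Y
    by_cases hc : x = Y.e1 ∨ x = Y.e2
    · simp only [hoE, if_pos hc]
      exact SimpleGraph.mem_edgeFinset.2 (G.mem_edgeSet.2 Y.hf)
    · simp only [hoE, if_neg hc]
      exact SimpleGraph.mem_edgeFinset.2 (G.mem_edgeSet.2 Y.he)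
  have hmain := master_count (α := BadEvent n G χ)
    (β := Fin n × Sym2 (Fin n) × (Fin n × Fin n) × Bool) hχ
    {Y : BadEvent n G χ | x ∈ Y.Gverts}
    ((G.neighborFinset x) ×ˢ (G.edgeFinset ×ˢ ((Finset.univ : Finset (Fin n × Fin n)) ×ˢ
      (Finset.univ : Finset Bool))))
    (fun Y => (yv Y, oE Y, (Y.a1, Y.a2), decide (Y.b1 < Y.b2)))
    (fun Y => s(Y.b1, Y.b2))
    (fun p => χ s(p.2.2.1.1, p.2.2.1.2))
    ?_ ?_ ?_
  · refine le_trans hmain ?_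
    have hdeg : (G.neighborFinset x).card ≤ Δ := by
      rw [SimpleGraph.card_neighborFinset_eq_degree, ← hΔ]
      exact G.degree_le_maxDegree x
    have hm : 2 * G.edgeFinset.card ≤ n * Δ := by
      rw [← hΔ]; exact two_mul_edgeFinset_card_le
    have hcard : ((G.neighborFinset x) ×ˢ (G.edgeFinset ×ˢ ((Finset.univ : Finset (Fin n × Fin n)) ×ˢ
        (Finset.univ : Finset Bool)))).card =
        (G.neighborFinset x).card * (G.edgeFinset.card * ((n * n) * 2)) := by
      simp [Finset.card_product, Fintype.card_prod, Fintype.card_fin]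
    rw [hcard]
    have : (G.neighborFinset x).card * (G.edgeFinset.card * (n * n * 2)) ≤ Δ ^ 2 * n ^ 3 := by
      calc (G.neighborFinset x).card * (G.edgeFinset.card * (n * n * 2))
          = (G.neighborFinset x).card * (2 * G.edgeFinset.card) * (n * n) := by ring
        _ ≤ Δ * (n * Δ) * (n * n) := Nat.mul_le_mul (Nat.mul_le_mul hdeg hm) (le_refl _)
        _ = Δ ^ 2 * n ^ 3 := by ring
    exact Nat.mul_le_mul_right k this
  · intro Y hY
    simp only [Finset.mem_product, SimpleGraph.mem_neighborFinset, Finset.mem_univ,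
      and_true]
    exact ⟨hadj Y hY, hoEmem Y⟩
  · intro Y _
    refine ⟨by simp [Sym2.mk_isDiag_iff]; exact Y.hb, Y.hcol.symm⟩
  · intro Y hY Y' hY' hg hh
    simp only [Prod.mk.injEq] at hg
    obtain ⟨hg1, hg2, hg34, hg5⟩ := hg
    have hg3 : Y.a1 = Y'.a1 := hg34.1
    have hg4 : Y.a2 = Y'.a2 := hg34.2
    have kY := key Y hY
    have kY' := key Y' hY'
    rw [← hg1, ← hg2] at kY'
    have hef : Y.e1 = Y'.e1 ∧ Y.e2 = Y'.e2 ∧ Y.f1 = Y'.f1 ∧ Y.f2 = Y'.f2 := by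
      rcases kY with ⟨p1, p2⟩ | ⟨p1, p2⟩ <;> rcases kY' with ⟨q1, q2⟩ | ⟨q1, q2⟩
      · exact efeq (Or.inl ⟨p1.trans q1.symm, p2.trans q2.symm⟩)
      · exact efeq (Or.inr ⟨p1.trans q2.symm, p2.trans q1.symm⟩)
      · exact efeq (Or.inr ⟨p1.trans q2.symm, p2.trans q1.symm⟩)
      · exact efeq (Or.inl ⟨p1.trans q1.symm, p2.trans q2.symm⟩)
    exact eq_of_disj hef.1 hef.2.1 hef.2.2.1 hef.2.2.2
      (by rw [hg3, hg4]) hh (by rw [hg3, hg4]) (decide_eq_decide.mp hg5)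

/-- the shared `G`-vertex of an intersecting-type event -/
def BadEvent.vOf (Y : BadEvent n G χ) : Fin n := if Y.e1 = Y.f1 then Y.e1 else Y.e2
/-- the other endpoint of `e` -/
def BadEvent.yOf (Y : BadEvent n G χ) : Fin n := if Y.e1 = Y.vOf then Y.e2 else Y.e1
/-- the other endpoint of `f` -/
def BadEvent.zOf (Y : BadEvent n G χ) : Fin n := if Y.f1 = Y.vOf then Y.f2 else Y.f1

lemma shared_spec {Y : BadEvent n G χ} (h : Y.IsIntersectingType) :
    s(Y.e1,Y.e2) = s(Y.vOf, Y.yOf) ∧ s(Y.f1,Y.f2) = s(Y.vOf, Y.zOf) ∧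
    G.Adj Y.vOf Y.yOf ∧ G.Adj Y.vOf Y.zOf ∧ Y.yOf < Y.zOf := by
  rcases h with hp | hp | hp | hp
  · have hv : Y.vOf = Y.e1 := if_pos hp
    have hy : Y.yOf = Y.e2 := by rw [BadEvent.yOf, if_pos hv.symm]
    have hz : Y.zOf = Y.f2 := by rw [BadEvent.zOf, if_pos (by rw [hv, hp])]
    have hlt : Y.e2 < Y.f2 := by
      rcases Y.hlex with hl | ⟨-, hl⟩
      · exact absurd (hp ▸ hl) (lt_irrefl _)
      · exact hl
    refine ⟨by rw [hv, hy], by rw [hv, hz, hp], ?_, ?_, by rw [hy, hz]; exact hlt⟩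
    · rw [hv, hy]; exact Y.he
    · rw [hv, hz, hp]; exact Y.hf
  · exact absurd (hp ▸ Y.e1_lt_f2) (lt_irrefl _)
  · have hne : Y.e1 ≠ Y.f1 := fun hx =>
      absurd (hx.trans hp.symm : Y.e1 = Y.e2) (ne_of_lt Y.he_lt)
    have hv : Y.vOf = Y.e2 := if_neg hne
    have hy : Y.yOf = Y.e1 := by
      rw [BadEvent.yOf, if_neg (by rw [hv]; exact ne_of_lt Y.he_lt)]
    have hz : Y.zOf = Y.f2 := by rw [BadEvent.zOf, if_pos (by rw [hv, hp])]
    refine ⟨by rw [hv, hy, Sym2.eq_swap], by rw [hv, hz, hp], ?_, ?_, ?_⟩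
    · rw [hv, hy]; exact Y.he.symm
    · rw [hv, hz, hp]; exact Y.hf
    · rw [hy, hz]; exact lt_trans (hp ▸ Y.he_lt) Y.hf_lt
  · have hne : Y.e1 ≠ Y.f1 := by
      intro hx
      rcases Y.hlex with hl | ⟨-, hl⟩
      · exact absurd (hx ▸ hl) (lt_irrefl _)
      · exact absurd (hp ▸ hl) (lt_irrefl _)
    have hv : Y.vOf = Y.e2 := if_neg hne
    have hy : Y.yOf = Y.e1 := by
      rw [BadEvent.yOf, if_neg (by rw [hv]; exact ne_of_lt Y.he_lt)]
    have hz : Y.zOf = Y.f1 := by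
      rw [BadEvent.zOf, if_neg (by rw [hv, hp]; exact ne_of_lt Y.hf_lt)]
    have hlt : Y.e1 < Y.f1 := by
      rcases Y.hlex with hl | ⟨hl, -⟩
      · exact hl
      · exact absurd hl hne
    refine ⟨by rw [hv, hy, Sym2.eq_swap], by rw [hv, hz, hp, Sym2.eq_swap], ?_, ?_, ?_⟩
    · rw [hv, hy]; exact Y.he.symm
    · rw [hv, hz, hp]; exact Y.hf.symm
    · rw [hy, hz]; exact hlt

lemma vOf_mem_e (Y : BadEvent n G χ) : Y.e1 = Y.vOf ∨ Y.e2 = Y.vOf := by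
  rw [BadEvent.vOf]
  by_cases hc : Y.e1 = Y.f1
  · exact Or.inl (by rw [if_pos hc])
  · exact Or.inr (by rw [if_neg hc])

lemma vOf_mem_f {Y : BadEvent n G χ} (h : Y.IsIntersectingType) :
    Y.f1 = Y.vOf ∨ Y.f2 = Y.vOf := by
  have hs := (shared_spec h).2.1
  rw [Sym2.eq_iff] at hs
  rcases hs with ⟨h1, -⟩ | ⟨-, h2⟩
  · exact Or.inl h1
  · exact Or.inr h2

lemma x_eq_yOf {Y : BadEvent n G χ} (h : Y.IsIntersectingType) {x : Fin n}
    (hx : x = Y.e1 ∨ x = Y.e2) (hxv : x ≠ Y.vOf) : x = Y.yOf := by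
  have hs := (shared_spec h).1
  rw [Sym2.eq_iff] at hs
  rcases hs with ⟨h1, h2⟩ | ⟨h1, h2⟩ <;> rcases hx with rfl | rfl
  · exact absurd h1 hxv
  · exact h2
  · exact h1
  · exact absurd h2 hxv

lemma x_eq_zOf {Y : BadEvent n G χ} (h : Y.IsIntersectingType) {x : Fin n}
    (hx : x = Y.f1 ∨ x = Y.f2) (hxv : x ≠ Y.vOf) : x = Y.zOf := by
  have hs := (shared_spec h).2.1
  rw [Sym2.eq_iff] at hs
  rcases hs with ⟨h1, h2⟩ | ⟨h1, h2⟩ <;> rcases hx with rfl | rfl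
  · exact absurd h1 hxv
  · exact h2
  · exact h1
  · exact absurd h2 hxv

lemma count_G_int1 [DecidableRel G.Adj] {Δ k : ℕ} (hΔ : G.maxDegree = Δ)
    (hχ : ∀ c : C, {e : Sym2 (Fin n) | ¬ e.IsDiag ∧ χ e = c}.ncard ≤ k) (x : Fin n) :
    2 * ({Y : BadEvent n G χ | (x ∈ Y.Gverts ∧ Y.IsIntersectingType) ∧
      ((x = Y.e1 ∨ x = Y.e2) ∧ (x = Y.f1 ∨ x = Y.f2))}).ncard ≤ Δ ^ 2 * n ^ 2 * k := by
  classical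
  set S := {Y : BadEvent n G χ | (x ∈ Y.Gverts ∧ Y.IsIntersectingType) ∧
      ((x = Y.e1 ∨ x = Y.e2) ∧ (x = Y.f1 ∨ x = Y.f2))} with hS
  have hxv : ∀ Y ∈ S, x = Y.vOf := by
    intro Y hY
    by_contra hne
    have h1 := x_eq_yOf hY.1.2 hY.2.1 hne
    have h2 := x_eq_zOf hY.1.2 hY.2.2 hne
    exact absurd (h1 ▸ h2 ▸ (shared_spec hY.1.2).2.2.2.2) (lt_irrefl _)
  have hmain := master_count (α := BadEvent n G χ)
    (β := (Fin n × Fin n) × (Fin n × Fin n)) hχ S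
    (((G.neighborFinset x ×ˢ G.neighborFinset x).filter fun p => p.1 < p.2) ×ˢ
      (Finset.univ : Finset (Fin n × Fin n)))
    (fun Y => ((Y.yOf, Y.zOf), (Y.a1, Y.a2)))
    (fun Y => s(Y.b1, Y.b2))
    (fun p => χ s(p.2.1, p.2.2))
    ?_ ?_ ?_
  · refine le_trans (Nat.mul_le_mul_left 2 hmain) ?_
    have hhalf : 2 * ((G.neighborFinset x ×ˢ G.neighborFinset x).filter
        fun p => p.1 < p.2).card ≤ Δ * Δ := by
      refine le_trans (two_mul_card_filter_le (G.neighborFinset x) (· < ·)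
        fun p q h => not_lt_of_gt h) ?_
      have hdeg : (G.neighborFinset x).card ≤ Δ := by
        rw [SimpleGraph.card_neighborFinset_eq_degree, ← hΔ]
        exact G.degree_le_maxDegree x
      exact Nat.mul_le_mul hdeg hdeg
    calc 2 * ((((G.neighborFinset x ×ˢ G.neighborFinset x).filter fun p => p.1 < p.2) ×ˢ
          (Finset.univ : Finset (Fin n × Fin n))).card * k)
        = (2 * ((G.neighborFinset x ×ˢ G.neighborFinset x).filter
            fun p => p.1 < p.2).card) * (n * n) * k := by
          simp [Finset.card_product, Fintype.card_prod, Fintype.card_fin]; try ring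
      _ ≤ (Δ * Δ) * (n * n) * k :=
          Nat.mul_le_mul_right k (Nat.mul_le_mul_right (n * n) hhalf)
      _ = Δ ^ 2 * n ^ 2 * k := by ring
  · intro Y hY
    have hspec := shared_spec hY.1.2
    rw [Finset.mem_product, Finset.mem_filter, Finset.mem_product]
    refine ⟨⟨⟨?_, ?_⟩, hspec.2.2.2.2⟩, Finset.mem_univ _⟩
    · rw [SimpleGraph.mem_neighborFinset, hxv Y hY]; exact hspec.2.2.1
    · rw [SimpleGraph.mem_neighborFinset, hxv Y hY]; exact hspec.2.2.2.1
  · intro Y _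
    exact ⟨by simp [Sym2.mk_isDiag_iff]; exact Y.hb, Y.hcol.symm⟩
  · intro Y hY Y' hY' hg hh
    simp only [Prod.mk.injEq] at hg
    obtain ⟨⟨hg1, hg2⟩, hg3, hg4⟩ := hg
    have hspec := shared_spec hY.1.2
    have hspec' := shared_spec hY'.1.2
    have heE : s(Y.e1, Y.e2) = s(Y'.e1, Y'.e2) := by
      rw [hspec.1, hspec'.1, ← hxv Y hY, ← hxv Y' hY', hg1]
    have hfE : s(Y.f1, Y.f2) = s(Y'.f1, Y'.f2) := by
      rw [hspec.2.1, hspec'.2.1, ← hxv Y hY, ← hxv Y' hY', hg2]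
    obtain ⟨u1, u2, u3, u4⟩ := efeq (Or.inl ⟨heE, hfE⟩)
    exact eq_of_int hY.1.2 u1 u2 u3 u4 (by rw [hg3, hg4]) hh

lemma count_G_int2 [DecidableRel G.Adj] {Δ k : ℕ} (hΔ : G.maxDegree = Δ)
    (hχ : ∀ c : C, {e : Sym2 (Fin n) | ¬ e.IsDiag ∧ χ e = c}.ncard ≤ k) (x : Fin n) :
    ({Y : BadEvent n G χ | (x ∈ Y.Gverts ∧ Y.IsIntersectingType) ∧
      ¬((x = Y.e1 ∨ x = Y.e2) ∧ (x = Y.f1 ∨ x = Y.f2))}).ncard ≤ Δ ^ 2 * n ^ 2 * k := by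
  classical
  set S := {Y : BadEvent n G χ | (x ∈ Y.Gverts ∧ Y.IsIntersectingType) ∧
      ¬((x = Y.e1 ∨ x = Y.e2) ∧ (x = Y.f1 ∨ x = Y.f2))} with hS
  have hxv : ∀ Y ∈ S, x ≠ Y.vOf := by
    intro Y hY hne
    refine hY.2 ⟨?_, ?_⟩
    · rcases vOf_mem_e Y with h | h
      · exact Or.inl (by rw [hne, ← h])
      · exact Or.inr (by rw [hne, ← h])
    · rcases vOf_mem_f hY.1.2 with h | h
      · exact Or.inl (by rw [hne, ← h])
      · exact Or.inr (by rw [hne, ← h])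
  -- which edge contains x, and the claim about edges
  have key : ∀ Y ∈ S,
      (s(Y.e1,Y.e2) = s(Y.vOf, x) ∧ s(Y.f1,Y.f2) =
        s(Y.vOf, if x = Y.e1 ∨ x = Y.e2 then Y.zOf else Y.yOf)) ∨
      (s(Y.e1,Y.e2) = s(Y.vOf, if x = Y.e1 ∨ x = Y.e2 then Y.zOf else Y.yOf) ∧
        s(Y.f1,Y.f2) = s(Y.vOf, x)) := by
    intro Y hY
    have hspec := shared_spec hY.1.2
    by_cases hc : x = Y.e1 ∨ x = Y.e2
    · left
      have hx := x_eq_yOf hY.1.2 hc (hxv Y hY)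
      rw [if_pos hc]
      exact ⟨by rw [hspec.1, ← hx], hspec.2.1⟩
    · right
      have hf : x = Y.f1 ∨ x = Y.f2 := by
        have := hY.1.1
        rw [mem_Gverts_iff] at this
        tauto
      have hx := x_eq_zOf hY.1.2 hf (hxv Y hY)
      rw [if_neg hc]
      exact ⟨hspec.1, by rw [hspec.2.1, ← hx]⟩
  have hadjxv : ∀ Y ∈ S, G.Adj x Y.vOf := by
    intro Y hY
    have hspec := shared_spec hY.1.2
    by_cases hc : x = Y.e1 ∨ x = Y.e2
    · rw [x_eq_yOf hY.1.2 hc (hxv Y hY)]; exact hspec.2.2.1.symm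
    · have hf : x = Y.f1 ∨ x = Y.f2 := by
        have := hY.1.1
        rw [mem_Gverts_iff] at this
        tauto
      rw [x_eq_zOf hY.1.2 hf (hxv Y hY)]; exact hspec.2.2.2.1.symm
  have hmain := master_count (α := BadEvent n G χ)
    (β := (Fin n × Fin n) × (Fin n × Fin n)) hχ S
    (((G.neighborFinset x).biUnion fun v => ({v} : Finset (Fin n)) ×ˢ G.neighborFinset v) ×ˢ
      (Finset.univ : Finset (Fin n × Fin n)))
    (fun Y => ((Y.vOf, if x = Y.e1 ∨ x = Y.e2 then Y.zOf else Y.yOf), (Y.a1, Y.a2)))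
    (fun Y => s(Y.b1, Y.b2))
    (fun p => χ s(p.2.1, p.2.2))
    ?_ ?_ ?_
  · refine le_trans hmain ?_
    have hcard : ((G.neighborFinset x).biUnion fun v =>
        ({v} : Finset (Fin n)) ×ˢ G.neighborFinset v).card ≤ Δ * Δ := by
      refine le_trans Finset.card_biUnion_le ?_
      have hdegx : (G.neighborFinset x).card ≤ Δ := by
        rw [SimpleGraph.card_neighborFinset_eq_degree, ← hΔ]
        exact G.degree_le_maxDegree x
      calc ∑ v ∈ G.neighborFinset x, (({v} : Finset (Fin n)) ×ˢ G.neighborFinset v).card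
          ≤ ∑ _v ∈ G.neighborFinset x, Δ := by
            refine Finset.sum_le_sum fun v _ => ?_
            rw [Finset.card_product, Finset.card_singleton, one_mul,
              SimpleGraph.card_neighborFinset_eq_degree, ← hΔ]
            exact G.degree_le_maxDegree v
        _ = (G.neighborFinset x).card * Δ := by rw [Finset.sum_const, smul_eq_mul]
        _ ≤ Δ * Δ := Nat.mul_le_mul_right Δ hdegx
    calc (((G.neighborFinset x).biUnion fun v =>
            ({v} : Finset (Fin n)) ×ˢ G.neighborFinset v) ×ˢ
          (Finset.univ : Finset (Fin n × Fin n))).card * k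
        = ((G.neighborFinset x).biUnion fun v =>
            ({v} : Finset (Fin n)) ×ˢ G.neighborFinset v).card * (n * n) * k := by
          simp [Finset.card_product, Fintype.card_prod, Fintype.card_fin]; try ring
      _ ≤ (Δ * Δ) * (n * n) * k :=
          Nat.mul_le_mul_right k (Nat.mul_le_mul_right (n * n) hcard)
      _ = Δ ^ 2 * n ^ 2 * k := by ring
  · intro Y hY
    have hspec := shared_spec hY.1.2
    rw [Finset.mem_product, Finset.mem_biUnion]
    refine ⟨⟨Y.vOf, by rw [SimpleGraph.mem_neighborFinset]; exact hadjxv Y hY, ?_⟩,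
      Finset.mem_univ _⟩
    rw [Finset.mem_product, Finset.mem_singleton]
    refine ⟨rfl, ?_⟩
    rw [SimpleGraph.mem_neighborFinset]
    show G.Adj Y.vOf (if x = Y.e1 ∨ x = Y.e2 then Y.zOf else Y.yOf)
    by_cases hc : x = Y.e1 ∨ x = Y.e2
    · rw [if_pos hc]; exact hspec.2.2.2.1
    · rw [if_neg hc]; exact hspec.2.2.1
  · intro Y _
    exact ⟨by simp [Sym2.mk_isDiag_iff]; exact Y.hb, Y.hcol.symm⟩
  · intro Y hY Y' hY' hg hh
    simp only [Prod.mk.injEq] at hg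
    obtain ⟨⟨hg1, hg2⟩, hg3, hg4⟩ := hg
    have kY := key Y hY
    have kY' := key Y' hY'
    rw [← hg1, ← hg2] at kY'
    have hef : Y.e1 = Y'.e1 ∧ Y.e2 = Y'.e2 ∧ Y.f1 = Y'.f1 ∧ Y.f2 = Y'.f2 := by
      rcases kY with ⟨p1, p2⟩ | ⟨p1, p2⟩ <;> rcases kY' with ⟨q1, q2⟩ | ⟨q1, q2⟩
      · exact efeq (Or.inl ⟨p1.trans q1.symm, p2.trans q2.symm⟩)
      · exact efeq (Or.inr ⟨p1.trans q2.symm, p2.trans q1.symm⟩)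
      · exact efeq (Or.inr ⟨p1.trans q2.symm, p2.trans q1.symm⟩)
      · exact efeq (Or.inl ⟨p1.trans q1.symm, p2.trans q2.symm⟩)
    exact eq_of_int hY.1.2 hef.1 hef.2.1 hef.2.2.1 hef.2.2.2 (by rw [hg3, hg4]) hh

lemma count_G_int [DecidableRel G.Adj] {Δ k : ℕ} (hΔ : G.maxDegree = Δ)
    (hχ : ∀ c : C, {e : Sym2 (Fin n) | ¬ e.IsDiag ∧ χ e = c}.ncard ≤ k) (x : Fin n) :
    ((({Y : BadEvent n G χ | x ∈ Y.Gverts} ∩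
        {Y : BadEvent n G χ | Y.IsIntersectingType}).ncard : ℝ)) ≤
      3/2 * (Δ : ℝ) ^ 2 * (n : ℝ) ^ 2 * (k : ℝ) := by
  classical
  set S1 := {Y : BadEvent n G χ | (x ∈ Y.Gverts ∧ Y.IsIntersectingType) ∧
      ((x = Y.e1 ∨ x = Y.e2) ∧ (x = Y.f1 ∨ x = Y.f2))} with hS1
  set S2 := {Y : BadEvent n G χ | (x ∈ Y.Gverts ∧ Y.IsIntersectingType) ∧
      ¬((x = Y.e1 ∨ x = Y.e2) ∧ (x = Y.f1 ∨ x = Y.f2))} with hS2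
  have hsub : ({Y : BadEvent n G χ | x ∈ Y.Gverts} ∩
      {Y : BadEvent n G χ | Y.IsIntersectingType}) ⊆ S1 ∪ S2 := by
    intro Y hY
    by_cases hc : (x = Y.e1 ∨ x = Y.e2) ∧ (x = Y.f1 ∨ x = Y.f2)
    · exact Or.inl ⟨⟨hY.1, hY.2⟩, hc⟩
    · exact Or.inr ⟨⟨hY.1, hY.2⟩, hc⟩
  have h0 : ({Y : BadEvent n G χ | x ∈ Y.Gverts} ∩
      {Y : BadEvent n G χ | Y.IsIntersectingType}).ncard ≤ S1.ncard + S2.ncard :=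
    le_trans (Set.ncard_le_ncard hsub (Set.toFinite _)) (Set.ncard_union_le _ _)
  have c1 := count_G_int1 (G := G) (χ := χ) hΔ hχ x
  have c2 := count_G_int2 (G := G) (χ := χ) hΔ hχ x
  rw [← hS1] at c1
  rw [← hS2] at c2
  have r0 : (({Y : BadEvent n G χ | x ∈ Y.Gverts} ∩
      {Y : BadEvent n G χ | Y.IsIntersectingType}).ncard : ℝ) ≤
      (S1.ncard : ℝ) + (S2.ncard : ℝ) := by exact_mod_cast h0
  have r1 : 2 * (S1.ncard : ℝ) ≤ (Δ : ℝ) ^ 2 * (n : ℝ) ^ 2 * (k : ℝ) := by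
    exact_mod_cast c1
  have r2 : (S2.ncard : ℝ) ≤ (Δ : ℝ) ^ 2 * (n : ℝ) ^ 2 * (k : ℝ) := by
    exact_mod_cast c2
  linarith

lemma sym2_other {p q w : Fin n} (h : w = p ∨ w = q) :
    s(p, q) = s(w, if w = p then q else p) := by
  by_cases h1 : w = p
  · rw [if_pos h1, h1]
  · rw [if_neg h1]
    rcases h with h | h
    · exact absurd h h1
    · rw [h, Sym2.eq_swap]

lemma count_K_int [DecidableRel G.Adj] {Δ k : ℕ} (hΔ : G.maxDegree = Δ)
    (hχ : ∀ c : C, {e : Sym2 (Fin n) | ¬ e.IsDiag ∧ χ e = c}.ncard ≤ k) (u : Fin n) :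
    ({Y : BadEvent n G χ | u ∈ Y.Kverts} ∩
      {Y : BadEvent n G χ | Y.IsIntersectingType}).ncard ≤ Δ ^ 2 * n ^ 2 * k := by
  classical
  set S := {Y : BadEvent n G χ | u ∈ Y.Kverts} ∩
      {Y : BadEvent n G χ | Y.IsIntersectingType} with hS
  set Bc : Finset (Fin n × Fin n × Fin n) := Finset.univ.biUnion (fun v : Fin n =>
    ((G.neighborFinset v ×ˢ G.neighborFinset v).filter fun p => p.1 < p.2).image
      fun p => (v, p.1, p.2)) with hBc
  set tK : BadEvent n G χ → Fin n := fun Y =>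
    if u = Y.a1 ∨ u = Y.a2 then (if u = Y.a1 then Y.a2 else Y.a1)
    else (if u = Y.b1 then Y.b2 else Y.b1) with htK
  have haE : ∀ Y : BadEvent n G χ, (u = Y.a1 ∨ u = Y.a2) →
      s(Y.a1, Y.a2) = s(u, tK Y) := by
    intro Y hc
    simp only [htK, if_pos hc]
    exact sym2_other hc
  have hbE : ∀ Y ∈ S, ¬(u = Y.a1 ∨ u = Y.a2) →
      s(Y.b1, Y.b2) = s(u, tK Y) := by
    intro Y hY hc
    have hu : u = Y.b1 ∨ u = Y.b2 := by
      have := hY.1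
      rw [Set.mem_setOf_eq, mem_Kverts_iff] at this
      tauto
    simp only [htK, if_neg hc]
    exact sym2_other hu
  have hmain := master_count (α := BadEvent n G χ)
    (β := (Fin n × Fin n × Fin n) × (Bool × Fin n)) hχ S
    (Bc ×ˢ (Finset.univ : Finset (Bool × Fin n)))
    (fun Y => ((Y.vOf, Y.yOf, Y.zOf), (decide (u = Y.a1 ∨ u = Y.a2), tK Y)))
    (fun Y => if u = Y.a1 ∨ u = Y.a2 then s(Y.b1, Y.b2) else s(Y.a1, Y.a2))
    (fun p => χ s(u, p.2.2))
    ?_ ?_ ?_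
  · refine le_trans hmain ?_
    have hBcard : 2 * Bc.card ≤ n * (Δ * Δ) := by
      have h1 : Bc.card ≤ ∑ v : Fin n,
          ((G.neighborFinset v ×ˢ G.neighborFinset v).filter fun p => p.1 < p.2).card :=
        le_trans Finset.card_biUnion_le
          (Finset.sum_le_sum fun v _ => Finset.card_image_le)
      have h2 : ∀ v : Fin n,
          2 * ((G.neighborFinset v ×ˢ G.neighborFinset v).filter fun p => p.1 < p.2).card ≤
            Δ * Δ := by
        intro v
        refine le_trans (two_mul_card_filter_le (G.neighborFinset v) (· < ·)
          fun p q h => not_lt_of_gt h) ?_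
        have hdeg : (G.neighborFinset v).card ≤ Δ := by
          rw [SimpleGraph.card_neighborFinset_eq_degree, ← hΔ]
          exact G.degree_le_maxDegree v
        exact Nat.mul_le_mul hdeg hdeg
      calc 2 * Bc.card ≤ ∑ v : Fin n, 2 *
            ((G.neighborFinset v ×ˢ G.neighborFinset v).filter fun p => p.1 < p.2).card := by
            rw [← Finset.mul_sum]; exact Nat.mul_le_mul_left 2 h1
        _ ≤ ∑ _v : Fin n, Δ * Δ := Finset.sum_le_sum fun v _ => h2 v
        _ = n * (Δ * Δ) := by
            rw [Finset.sum_const, Finset.card_univ, Fintype.card_fin, smul_eq_mul]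
    calc (Bc ×ˢ (Finset.univ : Finset (Bool × Fin n))).card * k
        = (2 * Bc.card) * n * k := by
          rw [Finset.card_product, Finset.card_univ, Fintype.card_prod, Fintype.card_bool,
            Fintype.card_fin]
          ring
      _ ≤ (n * (Δ * Δ)) * n * k :=
          Nat.mul_le_mul_right k (Nat.mul_le_mul_right n hBcard)
      _ = Δ ^ 2 * n ^ 2 * k := by ring
  · intro Y hY
    have hspec := shared_spec hY.2
    rw [Finset.mem_product]
    refine ⟨?_, Finset.mem_univ _⟩
    rw [hBc, Finset.mem_biUnion]
    refine ⟨Y.vOf, Finset.mem_univ _, ?_⟩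
    rw [Finset.mem_image]
    refine ⟨(Y.yOf, Y.zOf), ?_, rfl⟩
    rw [Finset.mem_filter, Finset.mem_product]
    exact ⟨⟨SimpleGraph.mem_neighborFinset _ _ _ |>.2 hspec.2.2.1,
      SimpleGraph.mem_neighborFinset _ _ _ |>.2 hspec.2.2.2.1⟩, hspec.2.2.2.2⟩
  · intro Y hY
    by_cases hc : u = Y.a1 ∨ u = Y.a2
    · constructor
      · show ¬(if u = Y.a1 ∨ u = Y.a2 then s(Y.b1, Y.b2) else s(Y.a1, Y.a2)).IsDiag
        rw [if_pos hc]
        simp [Sym2.mk_isDiag_iff]; exact Y.hb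
      · show χ (if u = Y.a1 ∨ u = Y.a2 then s(Y.b1, Y.b2) else s(Y.a1, Y.a2)) = χ s(u, tK Y)
        rw [if_pos hc, ← Y.hcol, haE Y hc]
    · constructor
      · show ¬(if u = Y.a1 ∨ u = Y.a2 then s(Y.b1, Y.b2) else s(Y.a1, Y.a2)).IsDiag
        rw [if_neg hc]
        simp [Sym2.mk_isDiag_iff]; exact Y.ha
      · show χ (if u = Y.a1 ∨ u = Y.a2 then s(Y.b1, Y.b2) else s(Y.a1, Y.a2)) = χ s(u, tK Y)
        rw [if_neg hc, Y.hcol, hbE Y hY hc]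
  · intro Y hY Y' hY' hg hh
    simp only [Prod.mk.injEq] at hg
    obtain ⟨⟨hv, hy, hz⟩, hbit, ht⟩ := hg
    have hspec := shared_spec hY.2
    have hspec' := shared_spec hY'.2
    have heE : s(Y.e1, Y.e2) = s(Y'.e1, Y'.e2) := by
      rw [hspec.1, hspec'.1, hv, hy]
    have hfE : s(Y.f1, Y.f2) = s(Y'.f1, Y'.f2) := by
      rw [hspec.2.1, hspec'.2.1, hv, hz]
    obtain ⟨u1, u2⟩ := sym2_sorted heE Y.he_lt Y'.he_lt
    obtain ⟨u3, u4⟩ := sym2_sorted hfE Y.hf_lt Y'.hf_lt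
    by_cases hc : u = Y.a1 ∨ u = Y.a2
    · have hc' : u = Y'.a1 ∨ u = Y'.a2 := by
        have := (decide_eq_decide).mp hbit
        tauto
      refine eq_of_int hY.2 u1 u2 u3 u4 ?_ ?_
      · rw [haE Y hc, haE Y' hc', ht]
      · have hhh : (if u = Y.a1 ∨ u = Y.a2 then s(Y.b1, Y.b2) else s(Y.a1, Y.a2)) =
            (if u = Y'.a1 ∨ u = Y'.a2 then s(Y'.b1, Y'.b2) else s(Y'.a1, Y'.a2)) := hh
        rw [if_pos hc, if_pos hc'] at hhh
        exact hhh
    · have hc' : ¬(u = Y'.a1 ∨ u = Y'.a2) := by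
        have := (decide_eq_decide).mp hbit
        tauto
      refine eq_of_int hY.2 u1 u2 u3 u4 ?_ ?_
      · have hhh : (if u = Y.a1 ∨ u = Y.a2 then s(Y.b1, Y.b2) else s(Y.a1, Y.a2)) =
            (if u = Y'.a1 ∨ u = Y'.a2 then s(Y'.b1, Y'.b2) else s(Y'.a1, Y'.a2)) := hh
        rw [if_neg hc, if_neg hc'] at hhh
        exact hhh
      · rw [hbE Y hY hc, hbE Y' hY' hc', ht]

set_option maxHeartbeats 1000000 in
lemma count_K_all [DecidableRel G.Adj] {Δ k : ℕ} (hΔ : G.maxDegree = Δ)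
    (hχ : ∀ c : C, {e : Sym2 (Fin n) | ¬ e.IsDiag ∧ χ e = c}.ncard ≤ k) (u : Fin n) :
    ({Y : BadEvent n G χ | u ∈ Y.Kverts}).ncard ≤ Δ ^ 2 * n ^ 3 * k := by
  classical
  set S := {Y : BadEvent n G χ | u ∈ Y.Kverts} with hS
  set EF : Finset (Fin n × Fin n) :=
    Finset.univ.filter (fun p : Fin n × Fin n => G.Adj p.1 p.2 ∧ p.1 < p.2) with hEF
  set LF : Finset ((Fin n × Fin n) × (Fin n × Fin n)) :=
    (EF ×ˢ EF).filter (fun p => p.1.1 < p.2.1 ∨ (p.1.1 = p.2.1 ∧ p.1.2 < p.2.2)) with hLF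
  set tK : BadEvent n G χ → Fin n := fun Y =>
    if u = Y.a1 ∨ u = Y.a2 then (if u = Y.a1 then Y.a2 else Y.a1)
    else (if u = Y.b1 then Y.b2 else Y.b1) with htK
  have haE : ∀ Y : BadEvent n G χ, (u = Y.a1 ∨ u = Y.a2) →
      s(Y.a1, Y.a2) = s(u, tK Y) := by
    intro Y hc
    simp only [htK, if_pos hc]
    exact sym2_other hc
  have hbE : ∀ Y ∈ S, ¬(u = Y.a1 ∨ u = Y.a2) →
      s(Y.b1, Y.b2) = s(u, tK Y) := by
    intro Y hY hc
    have hu : u = Y.b1 ∨ u = Y.b2 := by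
      have := hY
      rw [hS, Set.mem_setOf_eq, mem_Kverts_iff] at this
      tauto
    simp only [htK, if_neg hc]
    exact sym2_other hu
  have hmain := master_count (α := BadEvent n G χ)
    (β := ((Fin n × Fin n) × (Fin n × Fin n)) × (Bool × Fin n × Bool × Bool)) hχ S
    (LF ×ˢ (Finset.univ : Finset (Bool × Fin n × Bool × Bool)))
    (fun Y => (((Y.e1, Y.e2), (Y.f1, Y.f2)),
      (decide (u = Y.a1 ∨ u = Y.a2), tK Y, decide (Y.a1 < Y.a2), decide (Y.b1 < Y.b2))))
    (fun Y => if u = Y.a1 ∨ u = Y.a2 then s(Y.b1, Y.b2) else s(Y.a1, Y.a2))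
    (fun p => χ s(u, p.2.2.1))
    ?_ ?_ ?_
  · refine le_trans hmain ?_
    have l1 : 2 * LF.card ≤ EF.card * EF.card := by
      refine two_mul_card_filter_le EF
        (fun p q : Fin n × Fin n => p.1 < q.1 ∨ (p.1 = q.1 ∧ p.2 < q.2)) ?_
      rintro p q (h1 | ⟨h1, h2⟩) (h3 | ⟨h3, h4⟩)
      · exact absurd h3 (not_lt_of_gt h1)
      · exact absurd h1 (by rw [h3]; exact lt_irrefl _)
      · exact absurd h3 (by rw [h1]; exact lt_irrefl _)
      · exact absurd h4 (not_lt_of_gt h2)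
    have l2 : 2 * EF.card ≤ n * Δ := by
      have := two_mul_sorted_edges_le (G := G)
      rw [hΔ] at this
      exact this
    have l3 : 8 * LF.card ≤ (n * Δ) * (n * Δ) :=
      calc 8 * LF.card = 4 * (2 * LF.card) := by ring
        _ ≤ 4 * (EF.card * EF.card) := Nat.mul_le_mul_left 4 l1
        _ = (2 * EF.card) * (2 * EF.card) := by ring
        _ ≤ (n * Δ) * (n * Δ) := Nat.mul_le_mul l2 l2
    calc (LF ×ˢ (Finset.univ : Finset (Bool × Fin n × Bool × Bool))).card * k
        = (8 * LF.card) * n * k := by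
          simp only [Finset.card_product, Finset.card_univ, Fintype.card_prod,
            Fintype.card_bool, Fintype.card_fin]
          ring
      _ ≤ ((n * Δ) * (n * Δ)) * n * k :=
          Nat.mul_le_mul_right k (Nat.mul_le_mul_right n l3)
      _ = Δ ^ 2 * n ^ 3 * k := by ring
  · intro Y _
    rw [Finset.mem_product]
    refine ⟨?_, Finset.mem_univ _⟩
    rw [hLF, Finset.mem_filter, Finset.mem_product]
    refine ⟨⟨?_, ?_⟩, Y.hlex⟩
    · rw [hEF, Finset.mem_filter]
      exact ⟨Finset.mem_univ _, Y.he, Y.he_lt⟩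
    · rw [hEF, Finset.mem_filter]
      exact ⟨Finset.mem_univ _, Y.hf, Y.hf_lt⟩
  · intro Y hY
    by_cases hc : u = Y.a1 ∨ u = Y.a2
    · constructor
      · show ¬(if u = Y.a1 ∨ u = Y.a2 then s(Y.b1, Y.b2) else s(Y.a1, Y.a2)).IsDiag
        rw [if_pos hc]
        simp [Sym2.mk_isDiag_iff]; exact Y.hb
      · show χ (if u = Y.a1 ∨ u = Y.a2 then s(Y.b1, Y.b2) else s(Y.a1, Y.a2)) = χ s(u, tK Y)
        rw [if_pos hc, ← Y.hcol, haE Y hc]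
    · constructor
      · show ¬(if u = Y.a1 ∨ u = Y.a2 then s(Y.b1, Y.b2) else s(Y.a1, Y.a2)).IsDiag
        rw [if_neg hc]
        simp [Sym2.mk_isDiag_iff]; exact Y.ha
      · show χ (if u = Y.a1 ∨ u = Y.a2 then s(Y.b1, Y.b2) else s(Y.a1, Y.a2)) = χ s(u, tK Y)
        rw [if_neg hc, Y.hcol, hbE Y hY hc]
  · intro Y hY Y' hY' hg hh
    simp only [Prod.mk.injEq] at hg
    obtain ⟨⟨⟨u1, u2⟩, u3, u4⟩, hbit, ht, hA, hB⟩ := hg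
    have hAiff : (Y.a1 < Y.a2) ↔ (Y'.a1 < Y'.a2) := decide_eq_decide.mp hA
    have hBiff : (Y.b1 < Y.b2) ↔ (Y'.b1 < Y'.b2) := decide_eq_decide.mp hB
    by_cases hc : u = Y.a1 ∨ u = Y.a2
    · have hc' : u = Y'.a1 ∨ u = Y'.a2 := by
        have := (decide_eq_decide).mp hbit
        tauto
      refine eq_of_disj u1 u2 u3 u4 ?_ ?_ hAiff hBiff
      · rw [haE Y hc, haE Y' hc', ht]
      · have hhh : (if u = Y.a1 ∨ u = Y.a2 then s(Y.b1, Y.b2) else s(Y.a1, Y.a2)) =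
            (if u = Y'.a1 ∨ u = Y'.a2 then s(Y'.b1, Y'.b2) else s(Y'.a1, Y'.a2)) := hh
        rw [if_pos hc, if_pos hc'] at hhh
        exact hhh
    · have hc' : ¬(u = Y'.a1 ∨ u = Y'.a2) := by
        have := (decide_eq_decide).mp hbit
        tauto
      refine eq_of_disj u1 u2 u3 u4 ?_ ?_ hAiff hBiff
      · have hhh : (if u = Y.a1 ∨ u = Y.a2 then s(Y.b1, Y.b2) else s(Y.a1, Y.a2)) =
            (if u = Y'.a1 ∨ u = Y'.a2 then s(Y'.b1, Y'.b2) else s(Y'.a1, Y'.a2)) := hh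
        rw [if_neg hc, if_neg hc'] at hhh
        exact hhh
      · rw [hbE Y hY hc, hbE Y' hY' hc', ht]

/-- **Claim 13** of Böttcher–Kohayakawa–Procacci.  Let `G` be a graph on `[n]` with maximum
degree `Δ > 0` and let `χ` be a `k`-bounded edge colouring of `K_n`.  For every bad event
`X`: (1) for each vertex `x ∈ e ∪ f`, the set of `X` together with all bad events whose
`G`-edge vertex set contains `x` is a clique in the intersection graph `D'`, containing at
most `(3/2)·Δ²·n²·k` events of intersecting type and at most `Δ²·n³·k` events of disjoint
type; (2) for each vertex `u ∈ a ∪ b`, the set of all bad events whose `K_n`-edge vertex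
set contains `u` is a clique in `D'`, containing at most `Δ²·n²·k` events of intersecting
type and at most `Δ²·n³·k` events of disjoint type. -/
theorem badEvent_neighbourhood_clique_decomposition
    [DecidableRel G.Adj] {Δ k : ℕ}
    (hΔ : G.maxDegree = Δ) (hΔpos : 0 < Δ)
    (hχ : ∀ c : C, {e : Sym2 (Fin n) | ¬ e.IsDiag ∧ χ e = c}.ncard ≤ k)
    (X : BadEvent n G χ) :
    (∀ x ∈ X.Gverts,
      (intersectionGraph n G χ).IsClique
        ({X} ∪ {Y : BadEvent n G χ | x ∈ Y.Gverts}) ∧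
      (((({X} ∪ {Y : BadEvent n G χ | x ∈ Y.Gverts}) ∩
          {Y : BadEvent n G χ | Y.IsIntersectingType}).ncard : ℝ) ≤
        3/2 * (Δ : ℝ)^2 * (n : ℝ)^2 * (k : ℝ)) ∧
      ((({X} ∪ {Y : BadEvent n G χ | x ∈ Y.Gverts}) ∩
          {Y : BadEvent n G χ | ¬ Y.IsIntersectingType}).ncard ≤ Δ^2 * n^3 * k)) ∧
    (∀ u ∈ X.Kverts,
      (intersectionGraph n G χ).IsClique {Y : BadEvent n G χ | u ∈ Y.Kverts} ∧
      (({Y : BadEvent n G χ | u ∈ Y.Kverts} ∩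
          {Y : BadEvent n G χ | Y.IsIntersectingType}).ncard ≤ Δ^2 * n^2 * k) ∧
      (({Y : BadEvent n G χ | u ∈ Y.Kverts} ∩
          {Y : BadEvent n G χ | ¬ Y.IsIntersectingType}).ncard ≤ Δ^2 * n^3 * k)) := by
  constructor
  · intro x hx
    have hu : ({X} ∪ {Y : BadEvent n G χ | x ∈ Y.Gverts}) =
        {Y : BadEvent n G χ | x ∈ Y.Gverts} :=
      Set.union_eq_self_of_subset_left (Set.singleton_subset_iff.2 hx)
    refine ⟨?_, ?_, ?_⟩
    · rw [hu]
      intro Y hY Z hZ hne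
      exact (⟨hne, Or.inl ⟨x, Finset.mem_inter.2 ⟨hY, hZ⟩⟩⟩ : Y ≠ Z ∧ ((Y.Gverts ∩ Z.Gverts).Nonempty ∨ (Y.Kverts ∩ Z.Kverts).Nonempty))
    · rw [hu]
      exact count_G_int hΔ hχ x
    · rw [hu]
      exact le_trans (Set.ncard_le_ncard Set.inter_subset_left (Set.toFinite _))
        (count_G_all hΔ hχ x)
  · intro u hu
    refine ⟨?_, ?_, ?_⟩
    · intro Y hY Z hZ hne
      exact (⟨hne, Or.inr ⟨u, Finset.mem_inter.2 ⟨hY, hZ⟩⟩⟩ : Y ≠ Z ∧ ((Y.Gverts ∩ Z.Gverts).Nonempty ∨ (Y.Kverts ∩ Z.Kverts).Nonempty))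
    · exact count_K_int hΔ hχ u
    · exact le_trans (Set.ncard_le_ncard Set.inter_subset_left (Set.toFinite _))
        (count_K_all hΔ hχ u)
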